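/- Let K be a field, n ≥ 2 an integer, and let q, z_1, …, z_n ∈ K be nonzero elements such that z_2, …, z_n are pairwise distinct and, for all i, j ∈ {1,…,n}: q²z_i ≠ z_j, q·z_i + z_j ≠ 0, and q³·z_i + z_j ≠ 0. Then for every j ∈ {2,…,n} one has ∑_{k=2}^{n} μ̃_k(z_1;z_2,…,z_n) · 1/(1+q³z_k/z_j) + ∑_{k=2}^{n} ν̃_k(z_1;z_2,…,z_n) · 1/(1−q²z_k/z_j) = 1/(1+q³z_1/z_j). -/

import Mathlib

open Finset

/-- The coefficient function `μ̃_k(t;z_2,…,z_n)` of Khoroshkin–Shapiro. -/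
noncomputable def muTildeKS {K : Type*} [Field K] (n : ℕ) (q : K) (z : ℕ → K) (k : ℕ) (t : K) : K :=
  (∏ i ∈ (Icc 2 n).erase k, (t - z i) / (z k - z i)) *
    ∏ i ∈ Icc 2 n,
      ((q * t + z i) * (q ^ 2 * z k - z i) * (q ^ 3 * z k + z i)) /
        ((q * z k + z i) * (q ^ 2 * t - z i) * (q ^ 3 * t + z i))

/-- The coefficient function `ν̃_k(t;z_2,…,z_n)` of Khoroshkin–Shapiro. -/
noncomputable def nuTildeKS {K : Type*} [Field K] (n : ℕ) (q : K) (z : ℕ → K) (k : ℕ) (t : K) : K :=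
  -q ^ (n - 1) * (∏ i ∈ (Icc 2 n).erase k, (q * t + z i) / (z k - z i)) *
    ∏ i ∈ Icc 2 n,
      ((t - z i) * (q * z k + z i) * (q ^ 2 * z k - z i)) /
        ((z k + q * z i) * (q ^ 2 * t - z i) * (q ^ 3 * t + z i))

/-- degree of a product of polynomials each of degree at most 1 is at most the card. -/
theorem KS.degree_prod_le_card {K : Type*} [Field K] (s : Finset ℕ) (f : ℕ → Polynomial K)
    (h : ∀ i ∈ s, (f i).degree ≤ 1) : (∏ i ∈ s, f i).degree ≤ (s.card : ℕ) := by
  classical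
  induction s using Finset.cons_induction with
  | empty => simpa using Polynomial.degree_one_le
  | cons a s ha ih =>
    rw [Finset.prod_cons, Finset.card_cons]
    refine (Polynomial.degree_mul_le _ _).trans ?_
    have h1 : (f a).degree ≤ 1 := h a (Finset.mem_cons_self a s)
    have h2 : (∏ i ∈ s, f i).degree ≤ (s.card : ℕ) :=
      ih fun i hi => h i (Finset.mem_cons_of_mem hi)
    calc (f a).degree + (∏ i ∈ s, f i).degree ≤ 1 + (s.card : ℕ) := add_le_add h1 h2
      _ = ((s.card + 1 : ℕ) : WithBot ℕ) := by push_cast; ring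

theorem KS.frac1 {K : Type*} [Field K] (e1 e g p2 p3 q1 a1 q3 zj s : K)
    (he : e ≠ 0) (hq1 : q1 ≠ 0) (ha1 : a1 ≠ 0) (hq3 : q3 ≠ 0) (hs : s ≠ 0) :
    (e1 / e) * (((g * p2) * p3) / ((q1 * a1) * q3)) * (zj / s)
      = zj / s * (e⁻¹ * ((p2 * p3) / q1)) * (e1 * g) / (a1 * q3) := by
  rw [div_mul_div_comm, div_mul_div_comm, inv_eq_one_div, div_mul_div_comm, one_mul,
    div_mul_div_comm, div_mul_eq_mul_div, div_div]
  rw [div_eq_div_iff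
    (mul_ne_zero (mul_ne_zero he (mul_ne_zero (mul_ne_zero hq1 ha1) hq3)) hs)
    (mul_ne_zero (mul_ne_zero hs (mul_ne_zero he hq1)) (mul_ne_zero ha1 hq3))]
  ring

theorem weight_function_munu_tilde_second_columns
    (K : Type*) [Field K] (n : ℕ) (hn : 2 ≤ n) (q : K) (z : ℕ → K)
    (hq : q ≠ 0) (hz : ∀ i ∈ Icc 1 n, z i ≠ 0)
    (hdist : ∀ i ∈ Icc 2 n, ∀ j ∈ Icc 2 n, i ≠ j → z i ≠ z j)
    (hq2 : ∀ i ∈ Icc 1 n, ∀ j ∈ Icc 1 n, q ^ 2 * z i ≠ z j)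
    (hq1 : ∀ i ∈ Icc 1 n, ∀ j ∈ Icc 1 n, q * z i + z j ≠ 0)
    (hq3 : ∀ i ∈ Icc 1 n, ∀ j ∈ Icc 1 n, q ^ 3 * z i + z j ≠ 0) :
    ∀ j ∈ Icc 2 n,
      (∑ k ∈ Icc 2 n, muTildeKS n q z k (z 1) * (1 / (1 + q ^ 3 * z k / z j))) +
      (∑ k ∈ Icc 2 n, nuTildeKS n q z k (z 1) * (1 / (1 - q ^ 2 * z k / z j)))
      = 1 / (1 + q ^ 3 * z 1 / z j) := by
  intro j hj
  classical
  obtain ⟨m, rfl⟩ : ∃ m, n = m + 2 := ⟨n - 2, by omega⟩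
  clear hn
  set Z : Finset ℕ := Icc 2 (m + 2) with hZdef
  have hZsub : Z ⊆ Icc 1 (m + 2) := Finset.Icc_subset_Icc (by norm_num) le_rfl
  have hjZ : j ∈ Z := hj
  have hj1 : j ∈ Icc 1 (m + 2) := hZsub hj
  have hzj : z j ≠ 0 := hz j hj1
  have h1m : (1 : ℕ) ∈ Icc 1 (m + 2) := by simp
  have cardZ : Z.card = m + 1 := by simp [hZdef, Nat.card_Icc]
  have cardE : ∀ k ∈ Z, (Z.erase k).card = m := fun k hk => by
    rw [Finset.card_erase_of_mem hk, cardZ]; omega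
  -- basic nonvanishing
  have hB : ∀ k ∈ Icc 1 (m+2), ∀ i ∈ Icc 1 (m+2), q ^ 2 * z k - z i ≠ 0 :=
    fun k hk i hi => sub_ne_zero.mpr (hq2 k hk i hi)
  have hD : ∀ k ∈ Icc 1 (m+2), ∀ i ∈ Icc 1 (m+2), z k + q * z i ≠ 0 := by
    intro k hk i hi
    have := hq1 i hi k hk
    rwa [add_comm] at this
  have hEne : ∀ k ∈ Z, (∏ i ∈ Z.erase k, (z k - z i)) ≠ 0 := by
    intro k hk
    rw [Finset.prod_ne_zero_iff]
    intro i hi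
    exact sub_ne_zero.mpr (hdist k hk i (Finset.mem_of_mem_erase hi)
      (Finset.ne_of_mem_erase hi).symm)
  have hQ1ne : ∀ k ∈ Icc 1 (m+2), (∏ i ∈ Z, (q * z k + z i)) ≠ 0 := by
    intro k hk
    rw [Finset.prod_ne_zero_iff]
    intro i hi
    exact hq1 k hk i (hZsub hi)
  have hPdne : ∀ k ∈ Icc 1 (m+2), (∏ i ∈ Z, (z k + q * z i)) ≠ 0 := by
    intro k hk
    rw [Finset.prod_ne_zero_iff]
    intro i hi
    exact hD k hk i (hZsub hi)
  have hA1ne : (∏ i ∈ Z, (q ^ 2 * z 1 - z i)) ≠ 0 := by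
    rw [Finset.prod_ne_zero_iff]
    intro i hi
    exact hB 1 h1m i (hZsub hi)
  have hQ3ne : (∏ i ∈ Z, (q ^ 3 * z 1 + z i)) ≠ 0 := by
    rw [Finset.prod_ne_zero_iff]
    intro i hi
    exact hq3 1 h1m i (hZsub hi)
  -- the point set
  have hinj1 : Set.InjOn z Z := by
    intro i hi k hk h
    by_contra hne
    exact hdist i (by simpa using hi) k (by simpa using hk) hne h
  have hinj2 : Set.InjOn (fun i => -z i / q) Z := by
    intro i hi k hk h
    apply hinj1 hi hk
    simp only at h
    rw [div_eq_div_iff hq hq] at h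
    exact neg_inj.mp (mul_right_cancel₀ hq h)
  have hdisj : Disjoint (Z.image z) (Z.image (fun i => -z i / q)) := by
    rw [Finset.disjoint_left]
    rintro x hx hy
    obtain ⟨i, hi, rfl⟩ := Finset.mem_image.mp hx
    obtain ⟨k, hk, hik⟩ := Finset.mem_image.mp hy
    have hzz : q * z i + z k = 0 := by
      rw [← hik]
      field_simp
      ring
    exact hq1 i (hZsub hi) k (hZsub hk) hzz
  set T : Finset K := Z.image z ∪ Z.image (fun i => -z i / q) with hT
  have hTcard : T.card = (m + 1) + (m + 1) := by
    rw [hT, Finset.card_union_of_disjoint hdisj,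
      Finset.card_image_of_injOn hinj1, Finset.card_image_of_injOn hinj2, cardZ]
  -- the polynomials
  set Mp : ℕ → Polynomial K := fun k =>
    Polynomial.C (z j / (z j + q ^ 3 * z k) *
      ((∏ i ∈ Z.erase k, (z k - z i))⁻¹ *
        ∏ i ∈ Z, ((q ^ 2 * z k - z i) * (q ^ 3 * z k + z i) / (q * z k + z i)))) *
      ((∏ i ∈ Z.erase k, (Polynomial.X - Polynomial.C (z i))) *
        ∏ i ∈ Z, (Polynomial.C q * Polynomial.X + Polynomial.C (z i))) with hMp
  set Np : ℕ → Polynomial K := fun k =>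
    Polynomial.C (z j / (z j - q ^ 2 * z k) *
      (-q ^ (m + 1) * (∏ i ∈ Z.erase k, (z k - z i))⁻¹ *
        ∏ i ∈ Z, ((q * z k + z i) * (q ^ 2 * z k - z i) / (z k + q * z i)))) *
      ((∏ i ∈ Z.erase k, (Polynomial.C q * Polynomial.X + Polynomial.C (z i))) *
        ∏ i ∈ Z, (Polynomial.X - Polynomial.C (z i))) with hNp
  set Fp : Polynomial K :=
    Polynomial.C (z j) *
      ((∏ i ∈ Z.erase j, (Polynomial.C (q ^ 3) * Polynomial.X + Polynomial.C (z i))) *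
        ∏ i ∈ Z, (Polynomial.C (q ^ 2) * Polynomial.X - Polynomial.C (z i))) with hFp
  set P : Polynomial K := (∑ k ∈ Z, Mp k) + (∑ k ∈ Z, Np k) - Fp with hP
  -- degree bounds
  have hlin1 : ∀ (u v : K), (Polynomial.C u * Polynomial.X - Polynomial.C v).degree ≤ 1 := by
    intro u v
    rw [sub_eq_add_neg, ← Polynomial.C_neg]
    exact Polynomial.degree_linear_le
  have hdegMN : ∀ k ∈ Z, (Mp k).degree ≤ ((2 * m + 1 : ℕ) : WithBot ℕ) ∧
      (Np k).degree ≤ ((2 * m + 1 : ℕ) : WithBot ℕ) := by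
    intro k hk
    have h1 := KS.degree_prod_le_card (Z.erase k)
      (fun i => Polynomial.X - Polynomial.C (z i))
      (fun i _ => le_of_eq (Polynomial.degree_X_sub_C _))
    rw [cardE k hk] at h1
    have h2 := KS.degree_prod_le_card Z
      (fun i => Polynomial.C q * Polynomial.X + Polynomial.C (z i))
      (fun i _ => Polynomial.degree_linear_le)
    rw [cardZ] at h2
    have h3 := KS.degree_prod_le_card (Z.erase k)
      (fun i => Polynomial.C q * Polynomial.X + Polynomial.C (z i))
      (fun i _ => Polynomial.degree_linear_le)
    rw [cardE k hk] at h3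
    have h4 := KS.degree_prod_le_card Z
      (fun i => Polynomial.X - Polynomial.C (z i))
      (fun i _ => le_of_eq (Polynomial.degree_X_sub_C _))
    rw [cardZ] at h4
    constructor
    · simp only [hMp]
      refine (Polynomial.degree_mul_le _ _).trans ?_
      refine le_trans (add_le_add Polynomial.degree_C_le
        ((Polynomial.degree_mul_le _ _).trans (add_le_add h1 h2))) ?_
      rw [zero_add, ← Nat.cast_add]
      exact_mod_cast Nat.le_of_eq (by ring)
    · simp only [hNp]
      refine (Polynomial.degree_mul_le _ _).trans ?_
      refine le_trans (add_le_add Polynomial.degree_C_le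
        ((Polynomial.degree_mul_le _ _).trans (add_le_add h3 h4))) ?_
      rw [zero_add, ← Nat.cast_add]
      exact_mod_cast Nat.le_of_eq (by ring)
  have hdegF : Fp.degree ≤ ((2 * m + 1 : ℕ) : WithBot ℕ) := by
    have h1 := KS.degree_prod_le_card (Z.erase j)
      (fun i => Polynomial.C (q ^ 3) * Polynomial.X + Polynomial.C (z i))
      (fun i _ => Polynomial.degree_linear_le)
    rw [cardE j hjZ] at h1
    have h2 := KS.degree_prod_le_card Z
      (fun i => Polynomial.C (q ^ 2) * Polynomial.X - Polynomial.C (z i))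
      (fun i _ => hlin1 _ _)
    rw [cardZ] at h2
    simp only [hFp]
    refine (Polynomial.degree_mul_le _ _).trans ?_
    refine le_trans (add_le_add Polynomial.degree_C_le
      ((Polynomial.degree_mul_le _ _).trans (add_le_add h1 h2))) ?_
    rw [zero_add, ← Nat.cast_add]
    exact_mod_cast Nat.le_of_eq (by ring)
  have hdegP : P.degree < (T.card : ℕ) := by
    have hb : P.degree ≤ ((2 * m + 1 : ℕ) : WithBot ℕ) := by
      rw [hP]
      refine (Polynomial.degree_sub_le _ _).trans (max_le ?_ hdegF)
      refine (Polynomial.degree_add_le _ _).trans (max_le ?_ ?_)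
      · exact (Polynomial.degree_sum_le _ _).trans
          (Finset.sup_le fun k hk => (hdegMN k hk).1)
      · exact (Polynomial.degree_sum_le _ _).trans
          (Finset.sup_le fun k hk => (hdegMN k hk).2)
    refine lt_of_le_of_lt hb ?_
    rw [hTcard]
    have hlt : 2 * m + 1 < (m + 1) + (m + 1) := by omega
    exact_mod_cast hlt
  -- roots of the first kind : z p
  have hroot1 : ∀ p ∈ Z, Polynomial.eval (z p) P = 0 := by
    intro p hp
    have hp1 : p ∈ Icc 1 (m + 2) := hZsub hp
    rw [hP, Polynomial.eval_sub, Polynomial.eval_add, Polynomial.eval_finset_sum,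
      Polynomial.eval_finset_sum]
    have eN : ∀ k ∈ Z, Polynomial.eval (z p) (Np k) = 0 := by
      intro k hk
      simp only [hNp, Polynomial.eval_mul, Polynomial.eval_prod, Polynomial.eval_add,
        Polynomial.eval_sub, Polynomial.eval_C, Polynomial.eval_X]
      have h0 : (∏ i ∈ Z, (z p - z i)) = 0 := Finset.prod_eq_zero hp (by ring)
      rw [h0, mul_zero, mul_zero]
    rw [Finset.sum_eq_zero eN, add_zero]
    have off : ∀ k ∈ Z, k ≠ p → Polynomial.eval (z p) (Mp k) = 0 := by
      intro k hk hkp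
      simp only [hMp, Polynomial.eval_mul, Polynomial.eval_prod, Polynomial.eval_add,
        Polynomial.eval_sub, Polynomial.eval_C, Polynomial.eval_X]
      have h0 : (∏ i ∈ Z.erase k, (z p - z i)) = 0 :=
        Finset.prod_eq_zero (Finset.mem_erase.mpr ⟨Ne.symm hkp, hp⟩) (by ring)
      rw [h0, zero_mul, mul_zero]
    rw [Finset.sum_eq_single_of_mem p hp off]
    simp only [hMp, hFp, Polynomial.eval_mul, Polynomial.eval_prod, Polynomial.eval_add,
      Polynomial.eval_sub, Polynomial.eval_C, Polynomial.eval_X]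
    rw [sub_eq_zero]
    simp only [Finset.prod_div_distrib, Finset.prod_mul_distrib]
    rw [← Finset.mul_prod_erase Z (fun i => q ^ 3 * z p + z i) hjZ]
    have hEp := hEne p hp
    have hG := hQ1ne p hp1
    have hs : z j + q ^ 3 * z p ≠ 0 := by
      have := hq3 p hp1 j hj1
      rwa [add_comm] at this
    field_simp
    ring
  -- roots of the second kind : -z p / q
  have hroot2 : ∀ p ∈ Z, Polynomial.eval (-z p / q) P = 0 := by
    intro p hp
    have hp1 : p ∈ Icc 1 (m + 2) := hZsub hp
    have hqq : q * (-z p / q) = -z p := by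
      rw [mul_comm, div_mul_cancel₀ _ hq]
    rw [hP, Polynomial.eval_sub, Polynomial.eval_add, Polynomial.eval_finset_sum,
      Polynomial.eval_finset_sum]
    have eM : ∀ k ∈ Z, Polynomial.eval (-z p / q) (Mp k) = 0 := by
      intro k hk
      simp only [hMp, Polynomial.eval_mul, Polynomial.eval_prod, Polynomial.eval_add,
        Polynomial.eval_sub, Polynomial.eval_C, Polynomial.eval_X]
      have h0 : (∏ i ∈ Z, (q * (-z p / q) + z i)) = 0 :=
        Finset.prod_eq_zero hp (by rw [hqq]; ring)
      rw [h0, mul_zero, mul_zero]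
    rw [Finset.sum_eq_zero eM, zero_add]
    have off : ∀ k ∈ Z, k ≠ p → Polynomial.eval (-z p / q) (Np k) = 0 := by
      intro k hk hkp
      simp only [hNp, Polynomial.eval_mul, Polynomial.eval_prod, Polynomial.eval_add,
        Polynomial.eval_sub, Polynomial.eval_C, Polynomial.eval_X]
      have h0 : (∏ i ∈ Z.erase k, (q * (-z p / q) + z i)) = 0 :=
        Finset.prod_eq_zero (Finset.mem_erase.mpr ⟨Ne.symm hkp, hp⟩) (by rw [hqq]; ring)
      rw [h0, zero_mul, mul_zero]
    rw [Finset.sum_eq_single_of_mem p hp off]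
    simp only [hNp, hFp, Polynomial.eval_mul, Polynomial.eval_prod, Polynomial.eval_add,
      Polynomial.eval_sub, Polynomial.eval_C, Polynomial.eval_X]
    rw [sub_eq_zero]
    have t1 : (∏ i ∈ Z.erase p, (q * (-z p / q) + z i))
        = (-1 : K) ^ m * ∏ i ∈ Z.erase p, (z p - z i) := by
      rw [Finset.prod_congr rfl (g := fun i => (-1 : K) * (z p - z i))
        (fun i _ => by rw [hqq]; ring), Finset.prod_mul_distrib, Finset.prod_const, cardE p hp]
    have t2 : (∏ i ∈ Z, (-z p / q - z i))
        = ((-1 : K) / q) ^ (m + 1) * ∏ i ∈ Z, (z p + q * z i) := by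
      rw [Finset.prod_congr rfl (g := fun i => ((-1 : K) / q) * (z p + q * z i))
        (fun i _ => by field_simp; ring), Finset.prod_mul_distrib, Finset.prod_const, cardZ]
    have t3 : (∏ i ∈ Z.erase j, (q ^ 3 * (-z p / q) + z i))
        = (-1 : K) ^ m * ∏ i ∈ Z.erase j, (q ^ 2 * z p - z i) := by
      rw [Finset.prod_congr rfl (g := fun i => (-1 : K) * (q ^ 2 * z p - z i))
        (fun i _ => by field_simp; ring), Finset.prod_mul_distrib, Finset.prod_const, cardE j hjZ]
    have t4 : (∏ i ∈ Z, (q ^ 2 * (-z p / q) - z i))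
        = (-1 : K) ^ (m + 1) * ∏ i ∈ Z, (q * z p + z i) := by
      rw [Finset.prod_congr rfl (g := fun i => (-1 : K) * (q * z p + z i))
        (fun i _ => by field_simp; ring), Finset.prod_mul_distrib, Finset.prod_const, cardZ]
    rw [t1, t2, t3, t4]
    simp only [Finset.prod_div_distrib, Finset.prod_mul_distrib]
    rw [← Finset.mul_prod_erase Z (fun i => q ^ 2 * z p - z i) hjZ]
    have hEp := hEne p hp
    have hPd := hPdne p hp1
    have hsj : z j - q ^ 2 * z p ≠ 0 := sub_ne_zero.mpr (hq2 p hp1 j hj1).symm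
    have hqm : q ^ (m + 1) ≠ 0 := pow_ne_zero _ hq
    rw [div_pow]
    rw [div_mul_eq_mul_div, div_mul_eq_mul_div, div_eq_iff hsj]
    field_simp
    ring
  -- the polynomial vanishes
  have hP0 : P = 0 := by
    refine Polynomial.eq_zero_of_degree_lt_of_eval_finset_eq_zero T hdegP ?_
    intro x hx
    rw [hT, Finset.mem_union] at hx
    rcases hx with hx | hx
    · obtain ⟨p, hp, rfl⟩ := Finset.mem_image.mp hx
      exact hroot1 p hp
    · obtain ⟨p, hp, rfl⟩ := Finset.mem_image.mp hx
      exact hroot2 p hp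
  have hEv : (∑ k ∈ Z, Polynomial.eval (z 1) (Mp k)) + ∑ k ∈ Z, Polynomial.eval (z 1) (Np k)
      = Polynomial.eval (z 1) Fp := by
    have h := congrArg (Polynomial.eval (z 1)) hP0
    rw [hP, Polynomial.eval_sub, Polynomial.eval_add, Polynomial.eval_finset_sum,
      Polynomial.eval_finset_sum, Polynomial.eval_zero, sub_eq_zero] at h
    exact h
  -- express the goal summands via the polynomials
  have hs1 : z j + q ^ 3 * z 1 ≠ 0 := by
    have := hq3 1 h1m j hj1
    rwa [add_comm] at this
  have hmu : ∀ k ∈ Z, muTildeKS (m + 2) q z k (z 1) * (1 / (1 + q ^ 3 * z k / z j))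
      = Polynomial.eval (z 1) (Mp k) /
        ((∏ i ∈ Z, (q ^ 2 * z 1 - z i)) * ∏ i ∈ Z, (q ^ 3 * z 1 + z i)) := by
    intro k hk
    have hk1 := hZsub hk
    have hsk : z j + q ^ 3 * z k ≠ 0 := by
      have := hq3 k hk1 j hj1
      rwa [add_comm] at this
    have h1 : (1 : K) + q ^ 3 * z k / z j = (z j + q ^ 3 * z k) / z j := by field_simp
    simp only [hMp, muTildeKS, Polynomial.eval_mul, Polynomial.eval_prod, Polynomial.eval_add,
      Polynomial.eval_sub, Polynomial.eval_C, Polynomial.eval_X, ← hZdef]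
    rw [h1, one_div, inv_div]
    simp only [Finset.prod_div_distrib, Finset.prod_mul_distrib]
    have hEk := hEne k hk
    have hQ1 := hQ1ne k hk1
    exact KS.frac1 _ _ _ _ _ _ _ _ _ _ hEk hQ1 hA1ne hQ3ne hsk
  have hnu : ∀ k ∈ Z, nuTildeKS (m + 2) q z k (z 1) * (1 / (1 - q ^ 2 * z k / z j))
      = Polynomial.eval (z 1) (Np k) /
        ((∏ i ∈ Z, (q ^ 2 * z 1 - z i)) * ∏ i ∈ Z, (q ^ 3 * z 1 + z i)) := by
    intro k hk
    have hk1 := hZsub hk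
    have hsk : z j - q ^ 2 * z k ≠ 0 := sub_ne_zero.mpr (hq2 k hk1 j hj1).symm
    have h1 : (1 : K) - q ^ 2 * z k / z j = (z j - q ^ 2 * z k) / z j := by field_simp
    have e1 : m + 2 - 1 = m + 1 := rfl
    simp only [hNp, nuTildeKS, Polynomial.eval_mul, Polynomial.eval_prod, Polynomial.eval_add,
      Polynomial.eval_sub, Polynomial.eval_C, Polynomial.eval_X, ← hZdef, e1]
    rw [h1, one_div, inv_div]
    simp only [Finset.prod_div_distrib, Finset.prod_mul_distrib]
    have hEk := hEne k hk
    have hPd := hPdne k hk1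
    field_simp
  have hF : (1 : K) / (1 + q ^ 3 * z 1 / z j)
      = Polynomial.eval (z 1) Fp /
        ((∏ i ∈ Z, (q ^ 2 * z 1 - z i)) * ∏ i ∈ Z, (q ^ 3 * z 1 + z i)) := by
    have h1 : (1 : K) + q ^ 3 * z 1 / z j = (z j + q ^ 3 * z 1) / z j := by field_simp
    simp only [hFp, Polynomial.eval_mul, Polynomial.eval_prod, Polynomial.eval_add,
      Polynomial.eval_sub, Polynomial.eval_C, Polynomial.eval_X]
    rw [h1, one_div, inv_div]
    rw [← Finset.mul_prod_erase Z (fun i => q ^ 3 * z 1 + z i) hjZ]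
    have hFj : (∏ i ∈ Z.erase j, (q ^ 3 * z 1 + z i)) ≠ 0 := by
      rw [Finset.prod_ne_zero_iff]
      intro i hi
      exact hq3 1 h1m i (hZsub (Finset.mem_of_mem_erase hi))
    rw [div_eq_div_iff hs1
      (mul_ne_zero hA1ne (mul_ne_zero (hq3 1 h1m j hj1) hFj))]
    ring
  rw [Finset.sum_congr rfl hmu, Finset.sum_congr rfl hnu, ← Finset.sum_div, ← Finset.sum_div,
    ← add_div, hEv, hF]
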